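/- Under the same hypotheses as the limsup bound, the limit inferior B* := liminf_{t→∞} B(t) of a bounded nonnegative continuous solution of B(t) = σ(t) + ∫₀^t γ(a)f(B(t-a))da, with σ(t) → 0 as t → ∞ and ∫₀^∞ γ = 1, satisfies B* ≥ f(B*), and hence B* ∈ [0, κ₁] ∪ {κ₂}. -/

import Mathlib

open MeasureTheory Real Set Filter Topology

/-- the liminf of a bounded solution of the Volterra equation satisfies
`B* ≥ f(B*)`, hence `B* ∈ [0, κ₁] ∪ {κ₂}`. -/
theorem volterra_liminf_classification
    (γ : ℝ → ℝ) (βbar μlow : ℝ) (hβbar : 0 < βbar) (hμlow : 0 < μlow)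
    (hγmeas : Measurable γ) (hγpos : ∀ a, 0 ≤ γ a)
    (hγint : ∫ a in Ioi (0:ℝ), γ a = 1)
    (hγbdd : ∀ a : ℝ, 0 ≤ a → γ a ≤ βbar * exp (-μlow * a))
    (f : ℝ → ℝ) (hfcont : Continuous f) (hfmono : MonotoneOn f (Ici 0))
    (hfpos : ∀ x, 0 ≤ x → 0 ≤ f x)
    (κ₁ κ₂ : ℝ) (hκ₁ : 0 < κ₁) (hκ₁₂ : κ₁ < κ₂)
    (hfix : ∀ x : ℝ, 0 ≤ x → (f x = x ↔ x = 0 ∨ x = κ₁ ∨ x = κ₂))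
    (hfup : ∀ x ∈ Ioo κ₁ κ₂, x < f x)
    (hfdown : ∀ x : ℝ, x ∈ Ioo 0 κ₁ ∪ Ioi κ₂ → f x < x)
    (σ : ℝ → ℝ) (hσpos : ∀ t : ℝ, 0 ≤ t → 0 ≤ σ t)
    (hσ : Tendsto σ atTop (nhds 0))
    (B : ℝ → ℝ) (hBcont : Continuous B) (hBpos : ∀ t, 0 ≤ B t)
    (hBbdd : ∃ K, ∀ t, B t ≤ K)
    (hB : ∀ t : ℝ, 0 ≤ t → B t = σ t + ∫ a in (0:ℝ)..t, γ a * f (B (t - a))) :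
    f (liminf B atTop) ≤ liminf B atTop ∧
    (liminf B atTop ∈ Icc 0 κ₁ ∨ liminf B atTop = κ₂) := by
  obtain ⟨K₀, hK₀⟩ := hBbdd
  set K : ℝ := max K₀ 0 with hKdef
  have hK0 : (0:ℝ) ≤ K := le_max_right _ _
  have hBK : ∀ t, B t ≤ K := fun t => (hK₀ t).trans (le_max_left _ _)
  set L := liminf B atTop with hLdef
  set M := limsup B atTop with hMdef
  have hBble : IsBoundedUnder (· ≤ ·) atTop B := Filter.isBoundedUnder_of ⟨K, hBK⟩
  have hBbge : IsBoundedUnder (· ≥ ·) atTop B := Filter.isBoundedUnder_of ⟨0, hBpos⟩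
  have hL0 : 0 ≤ L :=
    le_liminf_of_le hBble.isCoboundedUnder_ge (Filter.Eventually.of_forall hBpos)
  have hLM : L ≤ M := liminf_le_limsup hBble hBbge
  have hM0 : 0 ≤ M := hL0.trans hLM
  -- integrability of γ on (0, ∞)
  have hγint_Ioi : IntegrableOn γ (Ioi 0) := by
    refine Integrable.mono' ((exp_neg_integrableOn_Ioi 0 hμlow).const_mul βbar)
      hγmeas.aestronglyMeasurable.restrict ?_
    filter_upwards [ae_restrict_mem measurableSet_Ioi] with a ha
    rw [Real.norm_eq_abs, abs_of_nonneg (hγpos a)]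
    exact hγbdd a ha.le
  -- the cumulative integral tends to 1
  have hc1 : Tendsto (fun s => ∫ a in (0:ℝ)..s, γ a) atTop (𝓝 1) := by
    have := intervalIntegral_tendsto_integral_Ioi 0 hγint_Ioi tendsto_id
    rwa [hγint] at this
  have hcle : ∀ s : ℝ, 0 ≤ s → (∫ a in (0:ℝ)..s, γ a) ≤ 1 := by
    intro s hs
    rw [intervalIntegral.integral_of_le hs, ← hγint]
    refine setIntegral_mono_set hγint_Ioi ?_ (HasSubset.Subset.eventuallyLE Ioc_subset_Ioi_self)
    exact Filter.Eventually.of_forall fun a => hγpos a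
  -- interval integrability of γ
  have hγII : ∀ u v : ℝ, 0 ≤ u → u ≤ v → IntervalIntegrable γ volume u v := by
    intro u v hu huv
    rw [intervalIntegrable_iff_integrableOn_Ioc_of_le huv]
    exact hγint_Ioi.mono_set fun a ha => hu.trans_lt ha.1
  -- interval integrability of the integrand
  have hfBmeas : Measurable fun p : ℝ => f (B p) := (hfcont.comp hBcont).measurable
  have hIntgen : ∀ t u v : ℝ, 0 ≤ u → u ≤ v →
      IntervalIntegrable (fun a => γ a * f (B (t - a))) volume u v := by
    intro t u v hu huv
    rw [intervalIntegrable_iff_integrableOn_Ioc_of_le huv]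
    have hmeas : AEStronglyMeasurable (fun a => γ a * f (B (t - a)))
        (volume.restrict (Ioc u v)) := by
      exact ((hγmeas.mul (hfBmeas.comp
        ((measurable_const.sub measurable_id')))).aestronglyMeasurable).restrict
    refine Integrable.mono' (g := fun _ => βbar * f K)
      (integrableOn_const measure_Ioc_lt_top.ne) hmeas ?_
    filter_upwards [ae_restrict_mem measurableSet_Ioc] with a ha
    have ha0 : (0:ℝ) ≤ a := hu.trans ha.1.le
    rw [Real.norm_eq_abs, abs_of_nonneg (mul_nonneg (hγpos a) (hfpos _ (hBpos _)))]
    have h1 : γ a ≤ βbar := by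
      refine (hγbdd a ha0).trans ?_
      have : Real.exp (-μlow * a) ≤ 1 := Real.exp_le_one_iff.mpr (by nlinarith)
      nlinarith
    exact mul_le_mul h1 (hfmono (hBpos _) hK0 (hBK _)) (hfpos _ (hBpos _)) hβbar.le
  -- lower key estimate : ∀ ε > 0, f (max (L - ε) 0) ≤ L
  have key_lower : ∀ ε : ℝ, 0 < ε → f (max (L - ε) 0) ≤ L := by
    intro ε hε
    set Lε : ℝ := max (L - ε) 0 with hLεdef
    have hLε0 : (0:ℝ) ≤ Lε := le_max_right _ _
    have h1 : ∀ᶠ t in atTop, L - ε < B t :=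
      eventually_lt_of_lt_liminf (by simp only [hLdef]; linarith) hBbge
    obtain ⟨T₀, hT₀⟩ := Filter.eventually_atTop.mp h1
    set T : ℝ := max T₀ 0 with hTdef
    have hT0 : (0:ℝ) ≤ T := le_max_right _ _
    have hTB : ∀ s, T ≤ s → Lε ≤ B s := by
      intro s hs
      exact max_le (le_of_lt (hT₀ s ((le_max_left _ _).trans hs))) (hBpos s)
    have hbound : ∀ᶠ t in atTop, f Lε * (∫ a in (0:ℝ)..(t - T), γ a) ≤ B t := by
      filter_upwards [Filter.eventually_ge_atTop T] with t ht
      have ht0 : (0:ℝ) ≤ t := hT0.trans ht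
      have htT : (0:ℝ) ≤ t - T := by linarith
      rw [hB t ht0]
      have hsplit : (∫ a in (0:ℝ)..(t - T), γ a * f (B (t - a)))
          + ∫ a in (t - T)..t, γ a * f (B (t - a))
          = ∫ a in (0:ℝ)..t, γ a * f (B (t - a)) :=
        intervalIntegral.integral_add_adjacent_intervals
          (hIntgen t 0 (t - T) le_rfl htT) (hIntgen t (t - T) t htT (by linarith))
      have h2 : f Lε * (∫ a in (0:ℝ)..(t - T), γ a)
          ≤ ∫ a in (0:ℝ)..(t - T), γ a * f (B (t - a)) := by
        rw [← intervalIntegral.integral_const_mul]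
        refine intervalIntegral.integral_mono_on htT
          ((hγII 0 (t - T) le_rfl htT).const_mul _) (hIntgen t 0 (t - T) le_rfl htT) ?_
        intro a ha
        rw [mul_comm]
        refine mul_le_mul_of_nonneg_left ?_ (hγpos a)
        exact hfmono hLε0 (hBpos _) (hTB (t - a) (by linarith [ha.2]))
      have h3 : 0 ≤ ∫ a in (t - T)..t, γ a * f (B (t - a)) :=
        intervalIntegral.integral_nonneg (by linarith)
          (fun a _ => mul_nonneg (hγpos a) (hfpos _ (hBpos _)))
      have h4 : 0 ≤ σ t := hσpos t ht0
      linarith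
    have hg : Tendsto (fun t : ℝ => f Lε * (∫ a in (0:ℝ)..(t - T), γ a)) atTop (𝓝 (f Lε)) := by
      have h5 : Tendsto (fun t : ℝ => t - T) atTop atTop :=
        tendsto_atTop_add_const_right atTop (-T) tendsto_id
      have := (hc1.comp h5).const_mul (f Lε)
      simpa using this
    calc f Lε = liminf (fun t : ℝ => f Lε * (∫ a in (0:ℝ)..(t - T), γ a)) atTop :=
          (hg.liminf_eq).symm
      _ ≤ L := liminf_le_liminf hbound hg.isBoundedUnder_ge hBble.isCoboundedUnder_ge
  -- upper key estimate : ∀ ε > 0, M ≤ f (M + ε)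
  have key_upper : ∀ ε : ℝ, 0 < ε → M ≤ f (M + ε) := by
    intro ε hε
    have h1 : ∀ᶠ t in atTop, B t < M + ε :=
      eventually_lt_of_limsup_lt (by simp only [hMdef]; linarith) hBble
    obtain ⟨T₀, hT₀⟩ := Filter.eventually_atTop.mp h1
    set T : ℝ := max T₀ 0 with hTdef
    have hT0 : (0:ℝ) ≤ T := le_max_right _ _
    have hMε0 : (0:ℝ) ≤ M + ε := by linarith
    have hbound : ∀ᶠ t in atTop,
        B t ≤ σ t + f (M + ε) * (∫ a in (0:ℝ)..(t - T), γ a)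
          + f K * (1 - ∫ a in (0:ℝ)..(t - T), γ a) := by
      filter_upwards [Filter.eventually_ge_atTop T] with t ht
      have ht0 : (0:ℝ) ≤ t := hT0.trans ht
      have htT : (0:ℝ) ≤ t - T := by linarith
      rw [hB t ht0]
      have hsplit : (∫ a in (0:ℝ)..(t - T), γ a * f (B (t - a)))
          + ∫ a in (t - T)..t, γ a * f (B (t - a))
          = ∫ a in (0:ℝ)..t, γ a * f (B (t - a)) :=
        intervalIntegral.integral_add_adjacent_intervals
          (hIntgen t 0 (t - T) le_rfl htT) (hIntgen t (t - T) t htT (by linarith))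
      have hγsplit : (∫ a in (0:ℝ)..(t - T), γ a) + ∫ a in (t - T)..t, γ a
          = ∫ a in (0:ℝ)..t, γ a :=
        intervalIntegral.integral_add_adjacent_intervals
          (hγII 0 (t - T) le_rfl htT) (hγII (t - T) t htT (by linarith))
      have h2 : (∫ a in (0:ℝ)..(t - T), γ a * f (B (t - a)))
          ≤ f (M + ε) * (∫ a in (0:ℝ)..(t - T), γ a) := by
        rw [← intervalIntegral.integral_const_mul]
        refine intervalIntegral.integral_mono_on htT (hIntgen t 0 (t - T) le_rfl htT)
          ((hγII 0 (t - T) le_rfl htT).const_mul _) ?_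
        intro a ha
        rw [mul_comm (f (M + ε))]
        refine mul_le_mul_of_nonneg_left ?_ (hγpos a)
        refine hfmono (hBpos _) hMε0 (le_of_lt (hT₀ (t - a) ?_))
        have h6 : T₀ ≤ T := le_max_left _ _
        linarith [ha.2]
      have h3 : (∫ a in (t - T)..t, γ a * f (B (t - a)))
          ≤ f K * ∫ a in (t - T)..t, γ a := by
        rw [← intervalIntegral.integral_const_mul]
        refine intervalIntegral.integral_mono_on (by linarith)
          (hIntgen t (t - T) t htT (by linarith))
          ((hγII (t - T) t htT (by linarith)).const_mul _) ?_
        intro a ha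
        rw [mul_comm (f K)]
        exact mul_le_mul_of_nonneg_left (hfmono (hBpos _) hK0 (hBK _)) (hγpos a)
      have h4 : (∫ a in (t - T)..t, γ a) ≤ 1 - ∫ a in (0:ℝ)..(t - T), γ a := by
        have h5 := hcle t ht0
        linarith
      have hfK0 : 0 ≤ f K := hfpos _ hK0
      have h7 := mul_le_mul_of_nonneg_left h4 hfK0
      linarith
    have hg : Tendsto (fun t : ℝ => σ t + f (M + ε) * (∫ a in (0:ℝ)..(t - T), γ a)
        + f K * (1 - ∫ a in (0:ℝ)..(t - T), γ a)) atTop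
        (nhds (0 + f (M + ε) * 1 + f K * (1 - 1))) := by
      have h5 : Tendsto (fun t : ℝ => t - T) atTop atTop :=
        tendsto_atTop_add_const_right atTop (-T) tendsto_id
      have hc : Tendsto (fun t : ℝ => ∫ a in (0:ℝ)..(t - T), γ a) atTop (nhds 1) :=
        hc1.comp h5
      exact (hσ.add (tendsto_const_nhds.mul hc)).add
        (tendsto_const_nhds.mul (tendsto_const_nhds.sub hc))
    have hg' : Tendsto (fun t : ℝ => σ t + f (M + ε) * (∫ a in (0:ℝ)..(t - T), γ a)
        + f K * (1 - ∫ a in (0:ℝ)..(t - T), γ a)) atTop (nhds (f (M + ε))) := by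
      simpa using hg
    calc M ≤ limsup (fun t : ℝ => σ t + f (M + ε) * (∫ a in (0:ℝ)..(t - T), γ a)
          + f K * (1 - ∫ a in (0:ℝ)..(t - T), γ a)) atTop :=
          limsup_le_limsup hbound hBbge.isCoboundedUnder_le hg'.isBoundedUnder_le
      _ = f (M + ε) := hg'.limsup_eq
  -- pass to the limit ε → 0
  have hMfM : M ≤ f M := by
    have h1 : Tendsto (fun n : ℕ => M + 1 / (n + 1 : ℝ)) atTop (nhds M) := by
      simpa using (tendsto_const_nhds (x := M)).add tendsto_one_div_add_atTop_nhds_zero_nat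
    have h2 : Tendsto (fun n : ℕ => f (M + 1 / (n + 1 : ℝ))) atTop (nhds (f M)) :=
      (hfcont.tendsto M).comp h1
    exact ge_of_tendsto' h2 fun n => key_upper _ (by positivity)
  have hfLL : f L ≤ L := by
    have h1 : Tendsto (fun n : ℕ => max (L - 1 / (n + 1 : ℝ)) 0) atTop (nhds L) := by
      have h0 : Tendsto (fun n : ℕ => L - 1 / (n + 1 : ℝ)) atTop (nhds L) := by
        simpa using (tendsto_const_nhds (x := L)).sub tendsto_one_div_add_atTop_nhds_zero_nat
      have h2 := h0.max (tendsto_const_nhds (x := (0:ℝ)))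
      rwa [max_eq_left hL0] at h2
    have h3 : Tendsto (fun n : ℕ => f (max (L - 1 / (n + 1 : ℝ)) 0)) atTop (nhds (f L)) :=
      (hfcont.tendsto L).comp h1
    exact le_of_tendsto' h3 fun n => key_lower _ (by positivity)
  -- classification
  have hMκ : M ≤ κ₂ := by
    by_contra h
    push_neg at h
    exact absurd hMfM (not_le.mpr (hfdown M (Or.inr h)))
  refine ⟨hfLL, ?_⟩
  rcases le_or_gt L κ₁ with h | h
  · exact Or.inl ⟨hL0, h⟩
  · right
    rcases eq_or_lt_of_le (hLM.trans hMκ) with heq | hlt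
    · exact heq
    · exact absurd hfLL (not_le.mpr (hfup L ⟨h, hlt⟩))
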